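/- arXiv:2506.09970 — 2 statements merged into one kernel-verified Lean document; each statement's English description precedes it below -/
import Mathlib

section
/- Let p ∈ (1, ∞) with conjugate exponent p' (1/p + 1/p' = 1), let N ≥ 1 be an integer, and for each k ∈ ℕ let 0 = τ_0^k ≤ τ_1^k ≤ … ≤ τ_N^k be real numbers such that for every j ∈ {0, …, N}, τ_j^k → τ_j^∞ in [0, +∞] as k → ∞. For each j ∈ {1, …, N} let u_j^k ∈ L^p((0,∞), ℝ^m) with sup_k ‖u_j^k‖_{L^p} < ∞ and such that u_j^k converges weakly to u_j^∞ ∈ L^p((0,∞), ℝ^m), i.e. ∫_0^∞ (u_j^k(t) − u_j^∞(t))·g(t) dt → 0 for every g ∈ L^{p'}((0,∞), ℝ^m). Define u_k = Σ_{j=1}^N u_j^k · 1_{[τ_{j-1}^k, τ_j^k)} and u_∞ = Σ_{j=1}^N u_j^∞ · 1_{[τ_{j-1}^∞, τ_j^∞)} (with the convention that [+∞, +∞) = ∅ and [a, +∞) is the unbounded half-line when the right endpoint is +∞). Then u_k → u_∞ in the sense of distributions: for every continuous φ : (0,∞) → ℝ^m with compact support contained in (0,∞), ∫_0^∞ u_k(t)·φ(t)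 dt → ∫_0^∞ u_∞(t)·φ(t) dt as k → ∞. -/
open Filter Topology MeasureTheory
open scoped ENNReal NNReal

section Helpers

lemma myELpNorm_eq {α : Type*} [MeasurableSpace α] {E : Type*} [NormedAddCommGroup E]
    {q : ℝ} (hq : 0 < q) (f : α → E) (μ : Measure α) :
    eLpNorm f (ENNReal.ofReal q) μ = (∫⁻ a, (‖f a‖₊ : ℝ≥0∞) ^ q ∂μ) ^ (1 / q) := by
  simp only [eLpNorm_eq_lintegral_rpow_enorm_toReal (show ENNReal.ofReal q ≠ 0 by simp [ENNReal.ofReal_eq_zero, not_le, hq])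
    ENNReal.ofReal_ne_top, ENNReal.toReal_ofReal hq.le, enorm_eq_nnnorm]

lemma myIntegrable_mul {α : Type*} [MeasurableSpace α] {μ : Measure α} {q q' : ℝ}
    (hqq' : Real.HolderConjugate q q') {f g : α → ℝ}
    (hf : MemLp f (ENNReal.ofReal q) μ) (hg : MemLp g (ENNReal.ofReal q') μ) :
    Integrable (fun t => f t * g t) μ := by
  refine ⟨hf.1.mul hg.1, ?_⟩
  show (∫⁻ a, (‖f a * g a‖₊ : ℝ≥0∞) ∂μ) < ⊤
  calc ∫⁻ a, (‖f a * g a‖₊ : ℝ≥0∞) ∂μ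
      = ∫⁻ a, ((fun x => (‖f x‖₊ : ℝ≥0∞)) * fun x => (‖g x‖₊ : ℝ≥0∞)) a ∂μ := by
        simp [nnnorm_mul, ENNReal.coe_mul]
    _ ≤ (∫⁻ a, (‖f a‖₊ : ℝ≥0∞) ^ q ∂μ) ^ (1 / q) * (∫⁻ a, (‖g a‖₊ : ℝ≥0∞) ^ q' ∂μ) ^ (1 / q') :=
        ENNReal.lintegral_mul_le_Lp_mul_Lq μ hqq' hf.1.nnnorm.aemeasurable.coe_nnreal_ennreal
          hg.1.nnnorm.aemeasurable.coe_nnreal_ennreal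
    _ < ⊤ := by
        rw [← myELpNorm_eq hqq'.pos f μ, ← myELpNorm_eq hqq'.symm.pos g μ]
        exact ENNReal.mul_lt_top hf.2 hg.2

lemma myMemLp_comp {α : Type*} [MeasurableSpace α] {μ : Measure α} {m : ℕ} {q : ℝ≥0∞}
    {f : α → Fin m → ℝ} (hf : MemLp f q μ) (i : Fin m) :
    MemLp (fun t => f t i) q μ := by
  refine ⟨(continuous_apply i).comp_aestronglyMeasurable hf.1, ?_⟩
  refine lt_of_le_of_lt (eLpNorm_mono fun x => ?_) hf.2
  exact (norm_le_pi_norm (f x) i)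

lemma myIntegrable_sum_mul {α : Type*} [MeasurableSpace α] {μ : Measure α} {m : ℕ}
    {q q' : ℝ} (hqq' : Real.HolderConjugate q q') {f g : α → Fin m → ℝ}
    (hf : MemLp f (ENNReal.ofReal q) μ) (hg : MemLp g (ENNReal.ofReal q') μ) :
    Integrable (fun t => ∑ i, f t i * g t i) μ :=
  integrable_finset_sum _ fun i _ => myIntegrable_mul hqq' (myMemLp_comp hf i) (myMemLp_comp hg i)

end Helpers

lemma myMemLp_indicator_cont {m : ℕ} {q : ℝ} (hq : 0 < q) {φ : ℝ → Fin m → ℝ}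
    (hφc : Continuous φ) (hφs : HasCompactSupport φ) {T : Set ℝ} (hT : MeasurableSet T) :
    MemLp (fun t => T.indicator φ t) (ENNReal.ofReal q)
      (MeasureTheory.volume.restrict (Set.Ioi (0:ℝ))) := by
  set ν := MeasureTheory.volume.restrict (Set.Ioi (0:ℝ))
  obtain ⟨M, hM⟩ := hφs.exists_bound_of_continuous hφc
  have hM0 : 0 ≤ M := le_trans (norm_nonneg _) (hM 0)
  have hKm : MeasurableSet (tsupport φ) := (isClosed_tsupport φ).measurableSet
  refine ⟨(hφc.aestronglyMeasurable.indicator hT), ?_⟩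
  have hle : ∀ x, ‖T.indicator φ x‖ ≤ ‖(tsupport φ).indicator (fun _ => M) x‖ := by
    intro x
    by_cases hxK : x ∈ tsupport φ
    · rw [Set.indicator_of_mem hxK, Real.norm_of_nonneg hM0]
      by_cases hxT : x ∈ T
      · rw [Set.indicator_of_mem hxT]; exact hM x
      · rw [Set.indicator_of_notMem hxT]; simpa using hM0
    · have hφ0 : φ x = 0 := image_eq_zero_of_notMem_tsupport hxK
      rw [Set.indicator_of_notMem hxK]
      by_cases hxT : x ∈ T
      · rw [Set.indicator_of_mem hxT, hφ0]; simp
      · rw [Set.indicator_of_notMem hxT]; simp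
  refine lt_of_le_of_lt (eLpNorm_mono hle) ?_
  rw [eLpNorm_indicator_const hKm (by simp [ENNReal.ofReal_eq_zero, not_le, hq])
    ENNReal.ofReal_ne_top]
  refine ENNReal.mul_lt_top ENNReal.coe_lt_top (ENNReal.rpow_lt_top_of_nonneg ?_ ?_)
  · positivity
  · exact ne_of_lt (lt_of_le_of_lt (MeasureTheory.Measure.restrict_le_self _)
      hφs.measure_lt_top)

lemma myEventually_mem_iff {a b : ℕ → ℝ} {A B : EReal}
    (ha : Tendsto (fun k => ((a k : ℝ) : EReal)) atTop (𝓝 A))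
    (hb : Tendsto (fun k => ((b k : ℝ) : EReal)) atTop (𝓝 B))
    {t : ℝ} (htA : (t : EReal) ≠ A) (htB : (t : EReal) ≠ B) :
    ∀ᶠ k in atTop, (t ∈ Set.Ico (a k) (b k) ↔
      t ∈ {s : ℝ | A ≤ (s : EReal) ∧ (s : EReal) < B}) := by
  rcases htA.lt_or_gt with hA | hA
  · -- t < A : eventually t < a k, and t ∉ S
    filter_upwards [ha.eventually (lt_mem_nhds hA)] with k hk
    have : t < a k := by exact_mod_cast hk
    simp only [Set.mem_Ico, Set.mem_setOf_eq]
    constructor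
    · rintro ⟨h1, _⟩; exact absurd (le_trans h1 (le_refl _)) (not_le.2 this)
    · rintro ⟨h1, _⟩; exact absurd hA (not_lt.2 h1)
  · rcases htB.lt_or_gt with hB | hB
    · -- A < t < B : t ∈ S, eventually a k ≤ t ∧ t < b k
      filter_upwards [ha.eventually (gt_mem_nhds hA), hb.eventually (lt_mem_nhds hB)]
        with k hk1 hk2
      have h1 : a k < t := by exact_mod_cast hk1
      have h2 : t < b k := by exact_mod_cast hk2
      simp only [Set.mem_Ico, Set.mem_setOf_eq]
      exact ⟨fun _ => ⟨le_of_lt hA, hB⟩, fun _ => ⟨le_of_lt h1, h2⟩⟩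
    · -- B < t : eventually b k < t, t ∉ S
      filter_upwards [hb.eventually (gt_mem_nhds hB)] with k hk
      have h2 : b k < t := by exact_mod_cast hk
      simp only [Set.mem_Ico, Set.mem_setOf_eq]
      constructor
      · rintro ⟨_, h⟩; exact absurd h2 (not_lt.2 (le_of_lt h))
      · rintro ⟨_, h⟩; exact absurd hB (not_lt.2 (le_of_lt h))

lemma myKey {m : ℕ} {p p' : ℝ} (hpq : Real.HolderConjugate p p')
    (a b : ℕ → ℝ) (A B : EReal)
    (ha : Tendsto (fun k => ((a k : ℝ) : EReal)) atTop (𝓝 A))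
    (hb : Tendsto (fun k => ((b k : ℝ) : EReal)) atTop (𝓝 B))
    (u : ℕ → ℝ → Fin m → ℝ) (ul : ℝ → Fin m → ℝ)
    (hmem : ∀ k, MemLp (u k) (ENNReal.ofReal p) (volume.restrict (Set.Ioi 0)))
    (hmeml : MemLp ul (ENNReal.ofReal p) (volume.restrict (Set.Ioi 0)))
    (hbdd : ∃ C : ℝ, ∀ k, eLpNorm (u k) (ENNReal.ofReal p)
      (volume.restrict (Set.Ioi 0)) ≤ ENNReal.ofReal C)
    (hweak : ∀ g : ℝ → Fin m → ℝ,
      MemLp g (ENNReal.ofReal p') (volume.restrict (Set.Ioi 0)) →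
      Tendsto (fun k => ∫ t in Set.Ioi 0, ∑ i, (u k t i - ul t i) * g t i) atTop (𝓝 0))
    (φ : ℝ → Fin m → ℝ) (hφc : Continuous φ) (hφs : HasCompactSupport φ) :
    Tendsto (fun k => ∫ t in Set.Ioi 0,
        ∑ i, (Set.Ico (a k) (b k)).indicator (u k) t i * φ t i) atTop
      (𝓝 (∫ t in Set.Ioi 0,
        ∑ i, Set.indicator {s : ℝ | A ≤ (s : EReal) ∧ (s : EReal) < B} ul t i * φ t i)) := by
  set ν := MeasureTheory.volume.restrict (Set.Ioi (0:ℝ)) with hν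
  set S := {s : ℝ | A ≤ (s : EReal) ∧ (s : EReal) < B} with hSdef
  have hS : MeasurableSet S := by
    have : S = ((↑) : ℝ → EReal) ⁻¹' (Set.Ico A B) := rfl
    rw [this]
    exact continuous_coe_real_ereal.measurable measurableSet_Ico
  set g : ℝ → Fin m → ℝ := S.indicator φ with hgdef
  have hgmem : MemLp g (ENNReal.ofReal p') ν := myMemLp_indicator_cont hpq.symm.pos hφc hφs hS
  have hik : ∀ k, MemLp ((Set.Ico (a k) (b k)).indicator φ) (ENNReal.ofReal p') ν :=
    fun k => myMemLp_indicator_cont hpq.symm.pos hφc hφs measurableSet_Ico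
  set F : ℕ → ℝ → ℝ := fun k t => ∑ i, u k t i * ((Set.Ico (a k) (b k)).indicator φ t) i with hF
  set G : ℕ → ℝ → ℝ := fun k t => ∑ i, u k t i * g t i with hG
  set L : ℝ → ℝ := fun t => ∑ i, ul t i * g t i with hL
  have intF : ∀ k, Integrable (F k) ν := fun k => myIntegrable_sum_mul hpq (hmem k) (hik k)
  have intG : ∀ k, Integrable (G k) ν := fun k => myIntegrable_sum_mul hpq (hmem k) hgmem
  have intL : Integrable L ν := myIntegrable_sum_mul hpq hmeml hgmem
  -- step 1
  have step1 : Tendsto (fun k => (∫ t, G k t ∂ν) - ∫ t, L t ∂ν) atTop (𝓝 0) := by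
    refine (hweak g hgmem).congr fun k => ?_
    rw [← integral_sub (intG k) intL]
    congr 1
    funext t
    simp only [hG, hL, sub_mul, Finset.sum_sub_distrib]
  -- step 2 : the Hölder squeeze
  have step2 : Tendsto (fun k => (∫ t, F k t ∂ν) - ∫ t, G k t ∂ν) atTop (𝓝 0) := by
    obtain ⟨C, hC⟩ := hbdd
    obtain ⟨M, hM⟩ := hφs.exists_bound_of_continuous hφc
    have hM0 : 0 ≤ M := le_trans (norm_nonneg _) (hM 0)
    set K := tsupport φ with hK
    have hKm : MeasurableSet K := (isClosed_tsupport φ).measurableSet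
    set c : ℕ → ℝ → ℝ := fun k t =>
      |Set.indicator (Set.Ico (a k) (b k)) (fun _ => (1:ℝ)) t -
        S.indicator (fun _ => (1:ℝ)) t| with hc
    have hc01 : ∀ k t, c k t = 0 ∨ c k t = 1 := by
      intro k t
      by_cases h1 : t ∈ Set.Ico (a k) (b k) <;> by_cases h2 : t ∈ S <;>
        simp [hc, h1, h2]
    set e : ℕ → ℝ → ℝ≥0∞ := fun k t => K.indicator (fun s => ENNReal.ofReal (c k s)) t with he
    have he01 : ∀ k t, e k t = 0 ∨ e k t = 1 := by
      intro k t
      by_cases htK : t ∈ K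
      · rcases hc01 k t with h | h <;>
          simp [he, Set.indicator_of_mem htK, h]
      · left; simp [he, Set.indicator_of_notMem htK]
    have hemeas : ∀ k, Measurable (e k) := by
      intro k
      refine Measurable.indicator ?_ hKm
      exact ((measurable_const.indicator measurableSet_Ico).sub
        (measurable_const.indicator hS)).abs.ennreal_ofReal
    have h_bound : ∀ k, e k ≤ᵐ[ν] K.indicator (fun _ => (1:ℝ≥0∞)) := by
      intro k
      refine Filter.Eventually.of_forall fun t => ?_
      by_cases htK : t ∈ K
      · simp only [he, Set.indicator_of_mem htK]
        refine ENNReal.ofReal_le_one.mpr ?_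
        rcases hc01 k t with h | h <;> simp [h]
      · simp [he, Set.indicator_of_notMem htK]
    have h_fin : (∫⁻ t, K.indicator (fun _ => (1:ℝ≥0∞)) t ∂ν) ≠ ⊤ := by
      rw [lintegral_indicator hKm, setLIntegral_one]
      exact ne_of_lt (lt_of_le_of_lt (Measure.restrict_apply_le _ _) hφs.measure_lt_top)
    have hZ : ∀ᵐ (t : ℝ) ∂ν, ((t : EReal) ≠ A ∧ (t : EReal) ≠ B) := by
      have h1 : ν {t : ℝ | (t : EReal) = A} = 0 := by
        refine le_antisymm (le_trans (Measure.restrict_apply_le _ _) (le_of_eq ?_)) zero_le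
        refine Set.Subsingleton.measure_zero (fun x hx y hy => ?_) _
        exact EReal.coe_eq_coe_iff.mp ((hx : (x:EReal) = A).trans (hy : (y:EReal) = A).symm)
      have h2 : ν {t : ℝ | (t : EReal) = B} = 0 := by
        refine le_antisymm (le_trans (Measure.restrict_apply_le _ _) (le_of_eq ?_)) zero_le
        refine Set.Subsingleton.measure_zero (fun x hx y hy => ?_) _
        exact EReal.coe_eq_coe_iff.mp ((hx : (x:EReal) = B).trans (hy : (y:EReal) = B).symm)
      filter_upwards [measure_eq_zero_iff_ae_notMem.mp h1, measure_eq_zero_iff_ae_notMem.mp h2]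
        with t ht1 ht2
      exact ⟨ht1, ht2⟩
    have h_lim : ∀ᵐ t ∂ν, Tendsto (fun k => e k t) atTop (𝓝 0) := by
      filter_upwards [hZ] with t ht
      have hev := myEventually_mem_iff ha hb ht.1 ht.2
      have h0 : (fun k => e k t) =ᶠ[atTop] fun _ => (0:ℝ≥0∞) := by
        filter_upwards [hev] with k hk
        have hct : c k t = 0 := by
          simp only [hc]
          by_cases h1 : t ∈ Set.Ico (a k) (b k)
          · rw [Set.indicator_of_mem h1,
              Set.indicator_of_mem (show t ∈ S from hk.mp h1)]; simp
          · rw [Set.indicator_of_notMem h1,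
              Set.indicator_of_notMem (show t ∉ S from fun hh => h1 (hk.mpr hh))]; simp
        by_cases htK : t ∈ K
        · simp [he, Set.indicator_of_mem htK, hct]
        · simp [he, Set.indicator_of_notMem htK]
      exact Tendsto.congr' h0.symm tendsto_const_nhds
    have hDCT : Tendsto (fun k => ∫⁻ t, e k t ∂ν) atTop (𝓝 0) := by
      have := tendsto_lintegral_of_dominated_convergence _ hemeas h_bound h_fin h_lim
      simpa using this
    have hptwise : ∀ k t, ENNReal.ofReal ‖F k t - G k t‖ ≤
        ((m : ℝ≥0∞) * ENNReal.ofReal M) * ((‖u k t‖₊ : ℝ≥0∞) * e k t) := by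
      intro k t
      set c' : ℝ := c k t * K.indicator (fun _ => (1:ℝ)) t with hc'
      have hcnn : 0 ≤ c k t := abs_nonneg _
      have hc'0 : 0 ≤ c' := mul_nonneg hcnn (by by_cases h : t ∈ K <;> simp [h])
      have hreal : ‖F k t - G k t‖ ≤ (m : ℝ) * (M * (‖u k t‖ * c')) := by
        have hd : ∀ i : Fin m, (Set.Ico (a k) (b k)).indicator φ t i - g t i
            = (Set.indicator (Set.Ico (a k) (b k)) (fun _ => (1:ℝ)) t -
              S.indicator (fun _ => (1:ℝ)) t) * φ t i := by
          intro i
          by_cases h1 : t ∈ Set.Ico (a k) (b k) <;> by_cases h2 : t ∈ S <;>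
            simp [hgdef, Set.indicator_apply, h1, h2]
        have hFG : F k t - G k t = ∑ i, u k t i *
            ((Set.Ico (a k) (b k)).indicator φ t i - g t i) := by
          simp only [hF, hG, mul_sub, Finset.sum_sub_distrib]
        rw [hFG]
        have hterm : ∀ i : Fin m, ‖u k t i *
            ((Set.Ico (a k) (b k)).indicator φ t i - g t i)‖ ≤ ‖u k t‖ * (M * c') := by
          intro i
          rw [hd i, norm_mul, norm_mul]
          refine mul_le_mul ?_ ?_ (by positivity) (norm_nonneg _)
          · exact norm_le_pi_norm (u k t) i
          · have hφi : ‖φ t i‖ ≤ M * K.indicator (fun _ => (1:ℝ)) t := by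
              by_cases htK : t ∈ K
              · rw [Set.indicator_of_mem htK]
                simpa using le_trans (norm_le_pi_norm (φ t) i) (hM t)
              · have : φ t = 0 := image_eq_zero_of_notMem_tsupport htK
                rw [Set.indicator_of_notMem htK, this]
                simp
            have hnc : ‖Set.indicator (Set.Ico (a k) (b k)) (fun _ => (1:ℝ)) t -
                S.indicator (fun _ => (1:ℝ)) t‖ = c k t := by
              simp [hc, Real.norm_eq_abs]
            rw [hnc]
            calc c k t * ‖φ t i‖ ≤ c k t * (M * K.indicator (fun _ => (1:ℝ)) t) :=
                  mul_le_mul_of_nonneg_left hφi hcnn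
              _ = M * c' := by rw [hc']; ring
        calc ‖∑ i, u k t i * ((Set.Ico (a k) (b k)).indicator φ t i - g t i)‖
            ≤ ∑ i, ‖u k t i * ((Set.Ico (a k) (b k)).indicator φ t i - g t i)‖ :=
              norm_sum_le _ _
          _ ≤ ∑ _i : Fin m, ‖u k t‖ * (M * c') := Finset.sum_le_sum fun i _ => hterm i
          _ = (m : ℝ) * (M * (‖u k t‖ * c')) := by
              rw [Finset.sum_const, Finset.card_univ, Fintype.card_fin, nsmul_eq_mul]
              ring
      have hofrc : ENNReal.ofReal c' = e k t := by
        by_cases htK : t ∈ K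
        · simp [hc', he, Set.indicator_of_mem htK]
        · simp [hc', he, Set.indicator_of_notMem htK]
      calc ENNReal.ofReal ‖F k t - G k t‖
          ≤ ENNReal.ofReal ((m : ℝ) * (M * (‖u k t‖ * c'))) :=
            ENNReal.ofReal_le_ofReal hreal
        _ = (m : ℝ≥0∞) * (ENNReal.ofReal M * (ENNReal.ofReal ‖u k t‖ * ENNReal.ofReal c')) := by
            rw [ENNReal.ofReal_mul (by positivity : (0:ℝ) ≤ (m:ℝ)),
              ENNReal.ofReal_mul hM0, ENNReal.ofReal_mul (norm_nonneg _),
              ENNReal.ofReal_natCast]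
        _ = ((m : ℝ≥0∞) * ENNReal.ofReal M) * ((‖u k t‖₊ : ℝ≥0∞) * e k t) := by
            rw [ofReal_norm, enorm_eq_nnnorm, hofrc]; ring
    have hp'nonneg : (0:ℝ) ≤ 1 / p' := le_of_lt (one_div_pos.mpr hpq.symm.pos)
    have hcmne : ((m : ℝ≥0∞) * ENNReal.ofReal M) ≠ ⊤ :=
      ENNReal.mul_ne_top (by simp) ENNReal.ofReal_ne_top
    have heint_ne : ∀ k, (∫⁻ t, e k t ∂ν) ≠ ⊤ := fun k =>
      ne_top_of_le_ne_top h_fin (lintegral_mono_ae (h_bound k))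
    have hnormbound : ∀ k, ‖(∫ t, F k t ∂ν) - ∫ t, G k t ∂ν‖ ≤
        (((m : ℝ≥0∞) * ENNReal.ofReal M * ENNReal.ofReal C) *
          (∫⁻ t, e k t ∂ν) ^ (1/p')).toReal := by
      intro k
      rw [← integral_sub (intF k) (intG k)]
      refine le_trans (norm_integral_le_lintegral_norm _) (ENNReal.toReal_mono ?_ ?_)
      · exact ENNReal.mul_ne_top (ENNReal.mul_ne_top hcmne ENNReal.ofReal_ne_top)
          (ENNReal.rpow_ne_top_of_nonneg hp'nonneg (heint_ne k))
      · calc ∫⁻ t, ENNReal.ofReal ‖F k t - G k t‖ ∂ν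
            ≤ ∫⁻ t, ((m : ℝ≥0∞) * ENNReal.ofReal M) * ((‖u k t‖₊ : ℝ≥0∞) * e k t) ∂ν :=
              lintegral_mono fun t => hptwise k t
          _ = ((m : ℝ≥0∞) * ENNReal.ofReal M) * ∫⁻ t, (‖u k t‖₊ : ℝ≥0∞) * e k t ∂ν :=
              lintegral_const_mul' _ _ hcmne
          _ ≤ ((m : ℝ≥0∞) * ENNReal.ofReal M) *
              ((∫⁻ t, (‖u k t‖₊ : ℝ≥0∞) ^ p ∂ν) ^ (1/p) *
                (∫⁻ t, (e k t) ^ p' ∂ν) ^ (1/p')) := by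
              refine mul_le_mul_right ?_ _
              exact ENNReal.lintegral_mul_le_Lp_mul_Lq ν hpq
                (hmem k).1.nnnorm.aemeasurable.coe_nnreal_ennreal (hemeas k).aemeasurable
          _ = ((m : ℝ≥0∞) * ENNReal.ofReal M) *
              (eLpNorm (u k) (ENNReal.ofReal p) ν * (∫⁻ t, e k t ∂ν) ^ (1/p')) := by
              rw [← myELpNorm_eq hpq.pos]
              congr 2
              refine congrArg (fun z => z ^ (1/p')) (lintegral_congr fun t => ?_)
              rcases he01 k t with h | h <;> rw [h]
              · exact ENNReal.zero_rpow_of_pos hpq.symm.pos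
              · exact ENNReal.one_rpow _
          _ ≤ ((m : ℝ≥0∞) * ENNReal.ofReal M * ENNReal.ofReal C) *
              (∫⁻ t, e k t ∂ν) ^ (1/p') := by
              exact le_trans (mul_le_mul_right (mul_le_mul_left (hC k) _) _)
                (by rw [← mul_assoc])
    have h1 : Tendsto (fun k => (∫⁻ t, e k t ∂ν) ^ (1/p')) atTop (𝓝 0) := by
      have h := ((ENNReal.continuous_rpow_const (y := 1/p')).tendsto 0).comp hDCT
      rw [ENNReal.zero_rpow_of_pos (one_div_pos.mpr hpq.symm.pos)] at h
      exact h
    have h2 : Tendsto (fun k => ((m : ℝ≥0∞) * ENNReal.ofReal M * ENNReal.ofReal C) *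
        (∫⁻ t, e k t ∂ν) ^ (1/p')) atTop
        (𝓝 (((m : ℝ≥0∞) * ENNReal.ofReal M * ENNReal.ofReal C) * 0)) :=
      ENNReal.Tendsto.const_mul h1
        (Or.inr (ENNReal.mul_ne_top hcmne ENNReal.ofReal_ne_top))
    rw [mul_zero] at h2
    have h3 := (ENNReal.tendsto_toReal (by simp : (0:ℝ≥0∞) ≠ ⊤)).comp h2
    rw [ENNReal.toReal_zero] at h3
    exact squeeze_zero_norm hnormbound h3
  have final : Tendsto (fun k => ∫ t, F k t ∂ν) atTop (𝓝 (∫ t, L t ∂ν)) := by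
    rw [← tendsto_sub_nhds_zero_iff]
    have := step1.add step2
    rw [add_zero] at this
    refine this.congr fun k => ?_
    ring
  have hFeq : ∀ k, (fun t => ∑ i, (Set.Ico (a k) (b k)).indicator (u k) t i * φ t i) = F k := by
    intro k; funext t
    refine Finset.sum_congr rfl fun i _ => ?_
    by_cases ht : t ∈ Set.Ico (a k) (b k)
    · simp [hF, Set.indicator_of_mem ht]
    · simp [hF, Set.indicator_of_notMem ht]
  have hLeq : (fun t => ∑ i, S.indicator ul t i * φ t i) = L := by
    funext t
    refine Finset.sum_congr rfl fun i _ => ?_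
    by_cases ht : t ∈ S
    · simp [hL, hgdef, Set.indicator_of_mem ht]
    · simp [hL, hgdef, Set.indicator_of_notMem ht]
  have final2 := Tendsto.congr (fun k => congrArg (fun f => ∫ t, f t ∂ν) (hFeq k).symm) final
  rw [show (∫ t, L t ∂ν) = ∫ t in Set.Ioi 0, ∑ i, S.indicator ul t i * φ t i from
    congrArg (fun f => ∫ t, f t ∂ν) hLeq.symm] at final2
  exact final2

/-- piecewise-defined controls built from weakly convergent pieces on
converging partitions converge in the sense of distributions to the corresponding
piecewise limit control. -/
theorem piecewise_controls_tendsto_distributions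
    {m N : ℕ} (hN : 1 ≤ N) (p p' : ℝ) (hp : 1 < p) (hpp' : 1 / p + 1 / p' = 1)
    (τ : ℕ → Fin (N + 1) → ℝ) (τlim : Fin (N + 1) → EReal)
    (hτ0 : ∀ k, τ k 0 = 0) (hτmono : ∀ k, Monotone (τ k))
    (hτconv : ∀ j : Fin (N + 1),
      Tendsto (fun k => ((τ k j : ℝ) : EReal)) atTop (𝓝 (τlim j)))
    (u : Fin N → ℕ → ℝ → (Fin m → ℝ)) (ulim : Fin N → ℝ → (Fin m → ℝ))
    (hmem : ∀ j k, MemLp (u j k) (ENNReal.ofReal p) (volume.restrict (Set.Ioi 0)))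
    (hmemlim : ∀ j, MemLp (ulim j) (ENNReal.ofReal p) (volume.restrict (Set.Ioi 0)))
    (hbdd : ∀ j, ∃ C : ℝ, ∀ k,
      eLpNorm (u j k) (ENNReal.ofReal p) (volume.restrict (Set.Ioi 0)) ≤ ENNReal.ofReal C)
    (hweak : ∀ j, ∀ g : ℝ → (Fin m → ℝ),
      MemLp g (ENNReal.ofReal p') (volume.restrict (Set.Ioi 0)) →
      Tendsto (fun k => ∫ t in Set.Ioi 0, ∑ i, (u j k t i - ulim j t i) * g t i)
        atTop (𝓝 0)) :
    ∀ φ : ℝ → (Fin m → ℝ), Continuous φ → HasCompactSupport φ →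
      tsupport φ ⊆ Set.Ioi 0 →
      Tendsto
        (fun k => ∫ t in Set.Ioi 0,
          ∑ i, (∑ j : Fin N,
            Set.indicator (Set.Ico (τ k j.castSucc) (τ k j.succ)) (u j k) t) i * φ t i)
        atTop
        (𝓝 (∫ t in Set.Ioi 0,
          ∑ i, (∑ j : Fin N,
            Set.indicator {s : ℝ | τlim j.castSucc ≤ (s : EReal) ∧ (s : EReal) < τlim j.succ}
              (ulim j) t) i * φ t i)) := by
  intro φ hφc hφs hφsupp
  have hpq : Real.HolderConjugate p p' := Real.holderConjugate_iff.mpr ⟨hp, by simpa [one_div] using hpp'⟩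
  set ν := MeasureTheory.volume.restrict (Set.Ioi (0:ℝ)) with hν
  have hφmem : MemLp φ (ENNReal.ofReal p') ν := by
    have := myMemLp_indicator_cont hpq.symm.pos hφc hφs MeasurableSet.univ
    simpa [Set.indicator_univ] using this
  have hSm : ∀ j : Fin N, MeasurableSet
      {s : ℝ | τlim j.castSucc ≤ (s : EReal) ∧ (s : EReal) < τlim j.succ} := by
    intro j
    have : {s : ℝ | τlim j.castSucc ≤ (s : EReal) ∧ (s : EReal) < τlim j.succ}
        = ((↑) : ℝ → EReal) ⁻¹' (Set.Ico (τlim j.castSucc) (τlim j.succ)) := rfl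
    rw [this]
    exact continuous_coe_real_ereal.measurable measurableSet_Ico
  have hintk : ∀ k (j : Fin N), Integrable (fun t =>
      ∑ i, (Set.Ico (τ k j.castSucc) (τ k j.succ)).indicator (u j k) t i * φ t i) ν :=
    fun k j => myIntegrable_sum_mul hpq ((hmem j k).indicator measurableSet_Ico) hφmem
  have hintlim : ∀ j : Fin N, Integrable (fun t =>
      ∑ i, Set.indicator {s : ℝ | τlim j.castSucc ≤ (s : EReal) ∧ (s : EReal) < τlim j.succ}
        (ulim j) t i * φ t i) ν :=
    fun j => myIntegrable_sum_mul hpq ((hmemlim j).indicator (hSm j)) hφmem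
  have hsum : ∀ k, (fun t => ∑ i, (∑ j : Fin N,
        Set.indicator (Set.Ico (τ k j.castSucc) (τ k j.succ)) (u j k) t) i * φ t i)
      = fun t => ∑ j : Fin N, ∑ i,
        Set.indicator (Set.Ico (τ k j.castSucc) (τ k j.succ)) (u j k) t i * φ t i := by
    intro k; funext t
    simp only [Finset.sum_apply, Finset.sum_mul]
    exact Finset.sum_comm
  have hsuml : (fun t => ∑ i, (∑ j : Fin N,
        Set.indicator {s : ℝ | τlim j.castSucc ≤ (s : EReal) ∧ (s : EReal) < τlim j.succ}
          (ulim j) t) i * φ t i)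
      = fun t => ∑ j : Fin N, ∑ i,
        Set.indicator {s : ℝ | τlim j.castSucc ≤ (s : EReal) ∧ (s : EReal) < τlim j.succ}
          (ulim j) t i * φ t i := by
    funext t
    simp only [Finset.sum_apply, Finset.sum_mul]
    exact Finset.sum_comm
  have lhs_eq : ∀ k, (∫ t, (∑ i, (∑ j : Fin N,
        Set.indicator (Set.Ico (τ k j.castSucc) (τ k j.succ)) (u j k) t) i * φ t i) ∂ν)
      = ∑ j : Fin N, ∫ t, (∑ i,
        Set.indicator (Set.Ico (τ k j.castSucc) (τ k j.succ)) (u j k) t i * φ t i) ∂ν := by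
    intro k
    rw [congrArg (fun f => ∫ t, f t ∂ν) (hsum k)]
    exact integral_finset_sum _ fun j _ => hintk k j
  have rhs_eq : (∫ t, (∑ i, (∑ j : Fin N,
        Set.indicator {s : ℝ | τlim j.castSucc ≤ (s : EReal) ∧ (s : EReal) < τlim j.succ}
          (ulim j) t) i * φ t i) ∂ν)
      = ∑ j : Fin N, ∫ t, (∑ i,
        Set.indicator {s : ℝ | τlim j.castSucc ≤ (s : EReal) ∧ (s : EReal) < τlim j.succ}
          (ulim j) t i * φ t i) ∂ν := by
    rw [congrArg (fun f => ∫ t, f t ∂ν) hsuml]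
    exact integral_finset_sum _ fun j _ => hintlim j
  have key : ∀ j : Fin N, Tendsto (fun k => ∫ t, (∑ i,
        Set.indicator (Set.Ico (τ k j.castSucc) (τ k j.succ)) (u j k) t i * φ t i) ∂ν)
      atTop (𝓝 (∫ t, (∑ i,
        Set.indicator {s : ℝ | τlim j.castSucc ≤ (s : EReal) ∧ (s : EReal) < τlim j.succ}
          (ulim j) t i * φ t i) ∂ν)) :=
    fun j => myKey hpq (fun k => τ k j.castSucc) (fun k => τ k j.succ)
      (τlim j.castSucc) (τlim j.succ) (hτconv _) (hτconv _) (u j) (ulim j)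
      (hmem j) (hmemlim j) (hbdd j) (hweak j) φ hφc hφs
  simp only [lhs_eq, rhs_eq]
  exact tendsto_finset_sum _ fun j _ => key j
end

section
/- Let p ∈ (1, ∞) with conjugate exponent p', and let a : [0, ∞) × ℝ^n → ℝ^n and b : [0, ∞) × ℝ^n → ℝ^{n×m} be Borel measurable maps satisfying: there exist measurable M, N : [0, ∞) → [0, ∞) with ∫_0^T M dt < ∞ and ∫_0^T N^{p'} dt < ∞ for every T > 0 such that |a(t, 0)| ≤ M(t) and |b(t, 0)| ≤ N(t) for a.e. t ≥ 0; and for every compact H ⊂ ℝ^n there exist measurable A_H, B_H : [0, ∞) → [0, ∞) with ∫_0^T A_H dt < ∞ and ∫_0^T B_H^{p'} dt < ∞ for every T > 0 such that |a(t, x_1) − a(t, x_2)| ≤ A_H(t)|x_1 − x_2| and |b(t, x_1) − b(t, x_2)| ≤ B_H(t)|x_1 − x_2| for all x_1, x_2 ∈ H and a.e. t ≥ 0. Let u_k, u ∈ L^p((0, ∞), ℝ^m) with sup_k ‖u_k‖_{L^p} < ∞ and ∫_0^∞ (u_k − u)·g dt → 0 for every g ∈ L^{p'}((0, ∞), ℝ^m).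 Let x_0 ∈ ℝ^n and let x_k, x : [0, ∞) → ℝ^n be continuous functions such that x_k → x uniformly on every compact subset of [0, ∞) and x_k(t) = x_0 + ∫_0^t [a(τ, x_k(τ)) + b(τ, x_k(τ)) u_k(τ)] dτ for all t ≥ 0 and all k. Then x(t) = x_0 + ∫_0^t [a(τ, x(τ)) + b(τ, x(τ)) u(τ)] dτ for all t ≥ 0. -/
open Filter Topology MeasureTheory
open scoped ENNReal

lemma clm_apply_eq_sum {n m : ℕ} (L : (Fin m → ℝ) →L[ℝ] (Fin n → ℝ)) (v : Fin m → ℝ) (i : Fin n) :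
    L v i = ∑ j, v j * L (Pi.single j 1) i := by
  have hv : v = ∑ j, v j • (Pi.single j 1 : Fin m → ℝ) := by
    funext s
    simp [Finset.sum_apply, Pi.single_apply]
  conv_lhs => rw [hv]
  rw [map_sum]
  simp [Finset.sum_apply, smul_eq_mul]

lemma norm_single_le {m : ℕ} (j : Fin m) : ‖(Pi.single j 1 : Fin m → ℝ)‖ ≤ 1 := by
  refine (pi_norm_le_iff_of_nonneg zero_le_one).2 fun i => ?_
  rcases eq_or_ne j i with h | h <;> simp [Pi.single_apply, h]

lemma memLp_of_integrable_rpow {f : ℝ → ℝ} {μ : Measure ℝ} (hm : Measurable f)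
    (hnn : ∀ s, 0 ≤ f s) {q : ℝ} (hq : 0 < q) (hint : Integrable (fun s => f s ^ q) μ) :
    MemLp f (ENNReal.ofReal q) μ := by
  have hq0 : ENNReal.ofReal q ≠ 0 := by simp [ENNReal.ofReal_eq_zero, not_le, hq]
  have hqt : ENNReal.ofReal q ≠ ⊤ := ENNReal.ofReal_ne_top
  have h := memLp_norm_rpow_iff (μ := μ) (p := ENNReal.ofReal q) (q := ENNReal.ofReal q)
      hm.aestronglyMeasurable hq0 hqt
  rw [ENNReal.div_self hq0 hqt] at h
  apply h.mp
  rw [memLp_one_iff_integrable]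
  have : (fun x : ℝ => ‖f x‖ ^ (ENNReal.ofReal q).toReal) = fun s => f s ^ q := by
    funext s
    rw [ENNReal.toReal_ofReal hq.le, Real.norm_of_nonneg (hnn s)]
  rw [this]
  exact hint


/-- Γ-closure of the admissible set (part 1 of Lemma 5.4): if
controls converge weakly in L^p and the corresponding Carathéodory solutions
converge locally uniformly, the limit state solves the limit controlled ODE. -/
theorem gamma_closure_admissible_set
    {n m : ℕ} (p p' : ℝ) (hp : 1 < p) (hpp' : 1 / p + 1 / p' = 1)
    (a : ℝ → (Fin n → ℝ) → (Fin n → ℝ))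
    (b : ℝ → (Fin n → ℝ) → ((Fin m → ℝ) →L[ℝ] (Fin n → ℝ)))
    (hameas : StronglyMeasurable (Function.uncurry a))
    (hbmeas : StronglyMeasurable (Function.uncurry b))
    (M N : ℝ → ℝ) (hMmeas : Measurable M) (hNmeas : Measurable N)
    (hMnonneg : ∀ t, 0 ≤ M t) (hNnonneg : ∀ t, 0 ≤ N t)
    (hMint : ∀ T > (0 : ℝ), IntegrableOn M (Set.Ioc 0 T))
    (hNint : ∀ T > (0 : ℝ), IntegrableOn (fun t => N t ^ p') (Set.Ioc 0 T))
    (haM : ∀ᵐ t ∂(volume.restrict (Set.Ioi 0)), ‖a t 0‖ ≤ M t)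
    (hbN : ∀ᵐ t ∂(volume.restrict (Set.Ioi 0)), ‖b t 0‖ ≤ N t)
    (hLip : ∀ H : Set (Fin n → ℝ), IsCompact H →
      ∃ AH BH : ℝ → ℝ, Measurable AH ∧ Measurable BH ∧
        (∀ t, 0 ≤ AH t) ∧ (∀ t, 0 ≤ BH t) ∧
        (∀ T > (0 : ℝ), IntegrableOn AH (Set.Ioc 0 T)) ∧
        (∀ T > (0 : ℝ), IntegrableOn (fun t => BH t ^ p') (Set.Ioc 0 T)) ∧
        (∀ᵐ t ∂(volume.restrict (Set.Ioi 0)), ∀ x₁ ∈ H, ∀ x₂ ∈ H,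
          ‖a t x₁ - a t x₂‖ ≤ AH t * ‖x₁ - x₂‖ ∧
          ‖b t x₁ - b t x₂‖ ≤ BH t * ‖x₁ - x₂‖))
    (u : ℝ → (Fin m → ℝ)) (uk : ℕ → ℝ → (Fin m → ℝ))
    (humem : MemLp u (ENNReal.ofReal p) (volume.restrict (Set.Ioi 0)))
    (hukmem : ∀ k, MemLp (uk k) (ENNReal.ofReal p) (volume.restrict (Set.Ioi 0)))
    (hukbdd : ∃ C : ℝ, ∀ k,
      eLpNorm (uk k) (ENNReal.ofReal p) (volume.restrict (Set.Ioi 0)) ≤ ENNReal.ofReal C)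
    (hweak : ∀ g : ℝ → (Fin m → ℝ),
      MemLp g (ENNReal.ofReal p') (volume.restrict (Set.Ioi 0)) →
      Tendsto (fun k => ∫ t in Set.Ioi 0, ∑ i, (uk k t i - u t i) * g t i) atTop (𝓝 0))
    (x₀ : Fin n → ℝ) (x : ℝ → (Fin n → ℝ)) (xk : ℕ → ℝ → (Fin n → ℝ))
    (hxcont : Continuous x) (hxkcont : ∀ k, Continuous (xk k))
    (hunif : ∀ K : Set ℝ, IsCompact K → K ⊆ Set.Ici 0 →
      TendstoUniformlyOn xk x atTop K)
    (hxkeq : ∀ k, ∀ t ≥ (0 : ℝ),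
      xk k t = x₀ + ∫ τ in Set.Ioc 0 t, (a τ (xk k τ) + b τ (xk k τ) (uk k τ))) :
    ∀ t ≥ (0 : ℝ), x t = x₀ + ∫ τ in Set.Ioc 0 t, (a τ (x τ) + b τ (x τ) (u τ)) := by
  intro t ht
  rcases eq_or_lt_of_le ht with ht0 | ht'
  · -- t = 0
    subst ht0
    have h0 : Set.Ioc (0:ℝ) 0 = ∅ := Set.Ioc_self 0
    have hz : ∀ (f : ℝ → Fin n → ℝ), (∫ τ in Set.Ioc (0:ℝ) 0, f τ) = 0 := by
      intro f; rw [h0]; simp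
    have h1 : Tendsto (fun k => xk k 0) atTop (𝓝 (x 0)) :=
      (hunif {0} isCompact_singleton (by simp)).tendsto_at rfl
    have h2 : (fun k => xk k 0) = fun _ => x₀ := by
      funext k
      rw [hxkeq k 0 le_rfl, hz]
      simp
    rw [h2] at h1
    have := tendsto_nhds_unique h1 tendsto_const_nhds
    rw [this, hz]
    simp
  ·
    -- t > 0 case
    set S := Set.Ioc (0:ℝ) t with hS
    have hsub : S ⊆ Set.Ioi (0:ℝ) := Set.Ioc_subset_Ioi_self
    have hle : volume.restrict S ≤ volume.restrict (Set.Ioi (0:ℝ)) :=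
      Measure.restrict_mono hsub le_rfl
    have hmemS : ∀ᵐ τ ∂(volume.restrict S), τ ∈ S := ae_restrict_mem measurableSet_Ioc
    -- exponents
    have hp0 : (0:ℝ) < p := lt_trans one_pos hp
    have hconj : Real.HolderConjugate p p' := ⟨by rw [inv_one, ← one_div, ← one_div]; exact hpp', hp0,
      one_div_pos.mp (by have : 1 / p < 1 := by rw [div_lt_one hp0]; exact hp
                         linarith)⟩
    have hp'0 : 0 < p' := hconj.right_pos
    have hpne0 : ENNReal.ofReal p ≠ 0 := by simp [ENNReal.ofReal_eq_zero, not_le, hp0]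
    have hpnet : ENNReal.ofReal p ≠ ⊤ := ENNReal.ofReal_ne_top
    have hone : (1:ℝ≥0∞)/1 = 1/ENNReal.ofReal p' + 1/ENNReal.ofReal p := by
      rw [div_one, one_div, one_div, add_comm]
      exact hconj.inv_add_inv_ennreal.symm
    -- compact set H
    have hKcpt : IsCompact (Set.Icc (0:ℝ) t) := isCompact_Icc
    have hUK : TendstoUniformlyOn xk x atTop (Set.Icc 0 t) :=
      hunif _ hKcpt (fun s hs => hs.1)
    obtain ⟨R₀, hR₀⟩ := (hKcpt.image_of_continuousOn hxcont.continuousOn).isBounded.subset_closedBall 0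
    set R := max R₀ 0 + 1 with hRdef
    have hR1 : (1:ℝ) ≤ R := by
      have : (0:ℝ) ≤ max R₀ 0 := le_max_right _ _
      linarith
    have hR0 : (0:ℝ) ≤ R := le_trans zero_le_one hR1
    have hHcpt : IsCompact (Metric.closedBall (0 : Fin n → ℝ) R) := isCompact_closedBall _ _
    have h0H : (0 : Fin n → ℝ) ∈ Metric.closedBall (0 : Fin n → ℝ) R := by
      simp [Metric.mem_closedBall, hR0]
    have hxnorm : ∀ s ∈ Set.Icc (0:ℝ) t, ‖x s‖ ≤ max R₀ 0 := by
      intro s hs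
      have := hR₀ (Set.mem_image_of_mem x hs)
      rw [Metric.mem_closedBall, dist_zero_right] at this
      exact le_trans this (le_max_left _ _)
    have hxH : ∀ s ∈ Set.Icc (0:ℝ) t, x s ∈ Metric.closedBall (0 : Fin n → ℝ) R := by
      intro s hs
      rw [Metric.mem_closedBall, dist_zero_right]
      have := hxnorm s hs
      linarith
    obtain ⟨AH, BH, hAHm, hBHm, hAHnn, hBHnn, hAHint, hBHint, hLipAB⟩ :=
      hLip (Metric.closedBall (0 : Fin n → ℝ) R) hHcpt
    -- transfer a.e. statements to S
    have haM' : ∀ᵐ τ ∂(volume.restrict S), ‖a τ 0‖ ≤ M τ := haM.filter_mono (ae_mono hle)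
    have hbN' : ∀ᵐ τ ∂(volume.restrict S), ‖b τ 0‖ ≤ N τ := hbN.filter_mono (ae_mono hle)
    have hLip' : ∀ᵐ τ ∂(volume.restrict S),
        ∀ x₁ ∈ Metric.closedBall (0 : Fin n → ℝ) R, ∀ x₂ ∈ Metric.closedBall (0 : Fin n → ℝ) R,
          ‖a τ x₁ - a τ x₂‖ ≤ AH τ * ‖x₁ - x₂‖ ∧ ‖b τ x₁ - b τ x₂‖ ≤ BH τ * ‖x₁ - x₂‖ :=
      hLipAB.filter_mono (ae_mono hle)
    -- pointwise bounds on H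
    have habd : ∀ᵐ τ ∂(volume.restrict S), ∀ y ∈ Metric.closedBall (0 : Fin n → ℝ) R,
        ‖a τ y‖ ≤ M τ + R * AH τ ∧ ‖b τ y‖ ≤ N τ + R * BH τ := by
      filter_upwards [hLip', haM', hbN'] with τ hLτ hMτ hNτ
      intro y hy
      have hyR : ‖y‖ ≤ R := by rwa [Metric.mem_closedBall, dist_zero_right] at hy
      obtain ⟨h1, h2⟩ := hLτ y hy 0 h0H
      have hy0 : ‖y - 0‖ ≤ R := by rwa [sub_zero]
      constructor
      · have : ‖a τ y‖ ≤ ‖a τ 0‖ + ‖a τ y - a τ 0‖ := norm_le_norm_add_norm_sub' _ _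
        have h3 : AH τ * ‖y - 0‖ ≤ AH τ * R := mul_le_mul_of_nonneg_left hy0 (hAHnn τ)
        nlinarith [hAHnn τ]
      · have : ‖b τ y‖ ≤ ‖b τ 0‖ + ‖b τ y - b τ 0‖ := norm_le_norm_add_norm_sub' _ _
        have h3 : BH τ * ‖y - 0‖ ≤ BH τ * R := mul_le_mul_of_nonneg_left hy0 (hBHnn τ)
        nlinarith [hBHnn τ]
    -- Memℒp facts on S
    have humem' : MemLp u (ENNReal.ofReal p) (volume.restrict S) := humem.mono_measure hle
    have hukmem' : ∀ k, MemLp (uk k) (ENNReal.ofReal p) (volume.restrict S) :=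
      fun k => (hukmem k).mono_measure hle
    have hNLp : MemLp N (ENNReal.ofReal p') (volume.restrict S) :=
      memLp_of_integrable_rpow hNmeas hNnonneg hp'0 (hNint t ht')
    have hBHLp : MemLp BH (ENNReal.ofReal p') (volume.restrict S) :=
      memLp_of_integrable_rpow hBHm hBHnn hp'0 (hBHint t ht')
    have hψLp : MemLp (fun τ => N τ + R * BH τ) (ENNReal.ofReal p') (volume.restrict S) :=
      hNLp.add (hBHLp.const_mul R)
    have hψnn : ∀ τ, 0 ≤ N τ + R * BH τ := fun τ =>
      add_nonneg (hNnonneg τ) (mul_nonneg hR0 (hBHnn τ))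
    have hMAint : Integrable (fun τ => M τ + R * AH τ) (volume.restrict S) :=
      (hMint t ht').add ((hAHint t ht').const_mul R)
    -- products are integrable (Hölder)
    have hmulInt : ∀ (φ : ℝ → ℝ), MemLp φ (ENNReal.ofReal p') (volume.restrict S) →
        ∀ (v : ℝ → Fin m → ℝ), MemLp v (ENNReal.ofReal p) (volume.restrict S) →
        Integrable (fun τ => φ τ * ‖v τ‖) (volume.restrict S) := by
      intro φ hφ v hv
      have h := MemLp.smul (μ := volume.restrict S) (hpqr := ⟨by
        rw [inv_one, ← one_div, ← one_div]; rw [div_one] at hone; exact hone.symm⟩) hv.norm hφ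
      rw [memLp_one_iff_integrable] at h
      exact h
    -- strong measurability
    have hax : AEStronglyMeasurable (fun τ => a τ (x τ)) (volume.restrict S) :=
      (hameas.comp_measurable (measurable_id.prodMk hxcont.measurable)).aestronglyMeasurable
    have haxk : ∀ k, AEStronglyMeasurable (fun τ => a τ (xk k τ)) (volume.restrict S) := fun k =>
      (hameas.comp_measurable (measurable_id.prodMk (hxkcont k).measurable)).aestronglyMeasurable
    have hbx : AEStronglyMeasurable (fun τ => b τ (x τ)) (volume.restrict S) :=
      (hbmeas.comp_measurable (measurable_id.prodMk hxcont.measurable)).aestronglyMeasurable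
    have hbxk : ∀ k, AEStronglyMeasurable (fun τ => b τ (xk k τ)) (volume.restrict S) := fun k =>
      (hbmeas.comp_measurable (measurable_id.prodMk (hxkcont k).measurable)).aestronglyMeasurable
    have happly : ∀ (Φ : ℝ → (Fin m → ℝ) →L[ℝ] (Fin n → ℝ)),
        AEStronglyMeasurable Φ (volume.restrict S) →
        ∀ (v : ℝ → Fin m → ℝ), AEStronglyMeasurable v (volume.restrict S) →
        AEStronglyMeasurable (fun τ => Φ τ (v τ)) (volume.restrict S) := by
      intro Φ hΦ v hv
      exact (ContinuousLinearMap.id ℝ ((Fin m → ℝ) →L[ℝ] (Fin n → ℝ))).aestronglyMeasurable_comp₂ hΦ hv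
    -- integrability of a-terms
    have hInt_a : ∀ (y : ℝ → Fin n → ℝ),
        AEStronglyMeasurable (fun τ => a τ (y τ)) (volume.restrict S) →
        (∀ s ∈ S, y s ∈ Metric.closedBall (0 : Fin n → ℝ) R) →
        Integrable (fun τ => a τ (y τ)) (volume.restrict S) := by
      intro y hym hyH
      refine hMAint.mono' hym ?_
      filter_upwards [habd, hmemS] with τ h1 h2
      exact (h1 (y τ) (hyH τ h2)).1
    -- integrability of b-terms
    have hInt_b : ∀ (y : ℝ → Fin n → ℝ),
        AEStronglyMeasurable (fun τ => b τ (y τ)) (volume.restrict S) →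
        (∀ s ∈ S, y s ∈ Metric.closedBall (0 : Fin n → ℝ) R) →
        ∀ (v : ℝ → Fin m → ℝ), MemLp v (ENNReal.ofReal p) (volume.restrict S) →
        Integrable (fun τ => b τ (y τ) (v τ)) (volume.restrict S) := by
      intro y hym hyH v hv
      refine (hmulInt _ hψLp v hv).mono' (happly _ hym v hv.1) ?_
      filter_upwards [habd, hmemS] with τ h1 h2
      calc ‖b τ (y τ) (v τ)‖ ≤ ‖b τ (y τ)‖ * ‖v τ‖ := (b τ (y τ)).le_opNorm _
        _ ≤ (N τ + R * BH τ) * ‖v τ‖ :=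
          mul_le_mul_of_nonneg_right (h1 (y τ) (hyH τ h2)).2 (norm_nonneg _)
    -- membership of trajectories in H
    have hxS : ∀ s ∈ S, x s ∈ Metric.closedBall (0 : Fin n → ℝ) R :=
      fun s hs => hxH s (Set.Ioc_subset_Icc_self hs)
    have hEv : ∀ᶠ k in atTop, ∀ s ∈ Set.Icc (0:ℝ) t, dist (x s) (xk k s) < 1 :=
      Metric.tendstoUniformlyOn_iff.mp hUK 1 one_pos
    have hkHmem : ∀ k, (∀ s ∈ Set.Icc (0:ℝ) t, dist (x s) (xk k s) < 1) →
        ∀ s ∈ S, xk k s ∈ Metric.closedBall (0 : Fin n → ℝ) R := by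
      intro k hk s hs
      have hs' : s ∈ Set.Icc (0:ℝ) t := Set.Ioc_subset_Icc_self hs
      rw [Metric.mem_closedBall, dist_zero_right]
      have h1 : ‖xk k s - x s‖ < 1 := by
        rw [← dist_eq_norm, dist_comm]
        exact hk s hs'
      have h2 := hxnorm s hs'
      have : ‖xk k s‖ ≤ ‖x s‖ + ‖xk k s - x s‖ := norm_le_norm_add_norm_sub' _ _
      have hRd : R = max R₀ 0 + 1 := hRdef
      linarith
    -- the limit integrals
    have hGxint : Integrable (fun τ => a τ (x τ)) (volume.restrict S) := hInt_a x hax hxS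
    have hGbint : Integrable (fun τ => b τ (x τ) (u τ)) (volume.restrict S) :=
      hInt_b x hbx hxS u humem'
    set I := ∫ τ in S, (a τ (x τ) + b τ (x τ) (u τ)) with hI
    set A : ℕ → Fin n → ℝ := fun k => ∫ τ in S, (a τ (xk k τ) - a τ (x τ)) with hA
    set B : ℕ → Fin n → ℝ := fun k => ∫ τ in S, ((b τ (xk k τ) - b τ (x τ)) (uk k τ)) with hB
    set W : ℕ → Fin n → ℝ := fun k => ∫ τ in S, (b τ (x τ) (uk k τ - u τ)) with hW
    have hAten : Tendsto A atTop (𝓝 0) := by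
      rw [NormedAddCommGroup.tendsto_nhds_zero]
      intro ε hε
      have hCA0 : 0 ≤ ∫ τ in S, AH τ := integral_nonneg fun τ => hAHnn τ
      set CA := ∫ τ in S, AH τ with hCAdef
      have hδ : 0 < ε / (CA + 1) := div_pos hε (by linarith)
      filter_upwards [Metric.tendstoUniformlyOn_iff.mp hUK _ hδ, hEv] with k hk hk1
      have hkH := hkHmem k hk1
      have h1 : ‖A k‖ ≤ ∫ τ in S, AH τ * (ε / (CA + 1)) := by
        simp only [hA]
        refine (norm_integral_le_integral_norm _).trans ?_
        refine integral_mono_of_nonneg (Eventually.of_forall fun τ => norm_nonneg _)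
          ((hAHint t ht').mul_const _) ?_
        filter_upwards [hLip', hmemS] with τ hLτ hτS
        have h2 := (hLτ (xk k τ) (hkH τ hτS) (x τ) (hxS τ hτS)).1
        have h3 : ‖xk k τ - x τ‖ ≤ ε / (CA + 1) := by
          rw [← dist_eq_norm, dist_comm]
          exact (hk τ (Set.Ioc_subset_Icc_self hτS)).le
        calc ‖a τ (xk k τ) - a τ (x τ)‖ ≤ AH τ * ‖xk k τ - x τ‖ := h2
          _ ≤ AH τ * (ε / (CA + 1)) := mul_le_mul_of_nonneg_left h3 (hAHnn τ)
      have h4 : ∫ τ in S, AH τ * (ε / (CA + 1)) = CA * (ε / (CA + 1)) :=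
        integral_mul_const _ _
      have h5 : CA * (ε / (CA + 1)) < ε := by
        have h6 : (CA + 1) * (ε / (CA + 1)) = ε := by field_simp
        nlinarith
      calc ‖A k‖ ≤ ∫ τ in S, AH τ * (ε / (CA + 1)) := h1
        _ = CA * (ε / (CA + 1)) := h4
        _ < ε := h5
    have hBten : Tendsto B atTop (𝓝 0) := by
      obtain ⟨C, hC⟩ := hukbdd
      have hCB0 : 0 ≤ (∫ τ in S, BH τ ^ p') ^ (1/p') :=
        Real.rpow_nonneg (integral_nonneg fun τ => Real.rpow_nonneg (hBHnn τ) _) _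
      set CB := (∫ τ in S, BH τ ^ p') ^ (1/p') with hCBdef
      have hCu0 : (0:ℝ) ≤ max C 0 := le_max_right _ _
      set Cu := max C 0 with hCudef
      have hCu : ∀ k, (∫ τ in S, ‖uk k τ‖ ^ p) ^ (1/p) ≤ Cu := by
        intro k
        have h1 : eLpNorm (uk k) (ENNReal.ofReal p) (volume.restrict S)
            ≤ ENNReal.ofReal Cu :=
          le_trans (le_trans (eLpNorm_mono_measure _ hle) (hC k))
            (ENNReal.ofReal_le_ofReal (le_max_left _ _))
        have h2 := (hukmem' k).eLpNorm_eq_integral_rpow_norm hpne0 hpnet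
        rw [h2] at h1
        have h3 := ENNReal.toReal_mono ENNReal.ofReal_ne_top h1
        rw [ENNReal.toReal_ofReal hCu0, ENNReal.toReal_ofReal] at h3
        · rw [ENNReal.toReal_ofReal hp0.le] at h3
          rw [one_div]
          exact h3
        · exact Real.rpow_nonneg (integral_nonneg fun τ =>
            Real.rpow_nonneg (norm_nonneg _) _) _
      have hHold : ∀ k, ∫ τ in S, BH τ * ‖uk k τ‖ ≤ CB * Cu := by
        intro k
        have h1 := integral_mul_le_Lp_mul_Lq_of_nonneg hconj.symm
          (Eventually.of_forall fun τ => hBHnn τ)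
          (Eventually.of_forall fun τ => norm_nonneg (uk k τ))
          hBHLp (hukmem' k).norm
        refine h1.trans ?_
        exact mul_le_mul_of_nonneg_left (hCu k) hCB0
      rw [NormedAddCommGroup.tendsto_nhds_zero]
      intro ε hε
      have hδ : 0 < ε / (CB * Cu + 1) := div_pos hε (by positivity)
      filter_upwards [Metric.tendstoUniformlyOn_iff.mp hUK _ hδ, hEv] with k hk hk1
      have hkH := hkHmem k hk1
      have hmaj : Integrable (fun τ => BH τ * ‖uk k τ‖ * (ε / (CB * Cu + 1)))
          (volume.restrict S) := (hmulInt BH hBHLp (uk k) (hukmem' k)).mul_const _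
      have h1 : ‖B k‖ ≤ ∫ τ in S, BH τ * ‖uk k τ‖ * (ε / (CB * Cu + 1)) := by
        simp only [hB]
        refine (norm_integral_le_integral_norm _).trans ?_
        refine integral_mono_of_nonneg (Eventually.of_forall fun τ => norm_nonneg _) hmaj ?_
        filter_upwards [hLip', hmemS] with τ hLτ hτS
        have h2 := (hLτ (xk k τ) (hkH τ hτS) (x τ) (hxS τ hτS)).2
        have h3 : ‖xk k τ - x τ‖ ≤ ε / (CB * Cu + 1) := by
          rw [← dist_eq_norm, dist_comm]
          exact (hk τ (Set.Ioc_subset_Icc_self hτS)).le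
        calc ‖(b τ (xk k τ) - b τ (x τ)) (uk k τ)‖
            ≤ ‖b τ (xk k τ) - b τ (x τ)‖ * ‖uk k τ‖ :=
              (b τ (xk k τ) - b τ (x τ)).le_opNorm _
          _ ≤ BH τ * ‖xk k τ - x τ‖ * ‖uk k τ‖ :=
              mul_le_mul_of_nonneg_right h2 (norm_nonneg _)
          _ ≤ BH τ * (ε / (CB * Cu + 1)) * ‖uk k τ‖ := by
              have := mul_le_mul_of_nonneg_left h3 (hBHnn τ)
              exact mul_le_mul_of_nonneg_right this (norm_nonneg _)
          _ = BH τ * ‖uk k τ‖ * (ε / (CB * Cu + 1)) := by ring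
      have h4 : ∫ τ in S, BH τ * ‖uk k τ‖ * (ε / (CB * Cu + 1))
          = (∫ τ in S, BH τ * ‖uk k τ‖) * (ε / (CB * Cu + 1)) := integral_mul_const _ _
      have h5 : (∫ τ in S, BH τ * ‖uk k τ‖) * (ε / (CB * Cu + 1)) < ε := by
        have h6 : (CB * Cu + 1) * (ε / (CB * Cu + 1)) = ε := by
          field_simp
        have h7 := hHold k
        have h8 : 0 ≤ ∫ τ in S, BH τ * ‖uk k τ‖ :=
          integral_nonneg fun τ => mul_nonneg (hBHnn τ) (norm_nonneg _)
        nlinarith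
      calc ‖B k‖ ≤ ∫ τ in S, BH τ * ‖uk k τ‖ * (ε / (CB * Cu + 1)) := h1
        _ = (∫ τ in S, BH τ * ‖uk k τ‖) * (ε / (CB * Cu + 1)) := h4
        _ < ε := h5
    have hWten : Tendsto W atTop (𝓝 0) := by
      have hWint : ∀ k, Integrable (fun τ => b τ (x τ) (uk k τ - u τ)) (volume.restrict S) :=
        fun k => hInt_b x hbx hxS (fun τ => uk k τ - u τ) ((hukmem' k).sub humem')
      rw [tendsto_pi_nhds]
      intro i
      set g : ℝ → Fin m → ℝ :=
        S.indicator (fun τ => fun j => b τ (x τ) (Pi.single j 1) i) with hgdef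
      have hgS : MemLp (fun τ => fun j => b τ (x τ) (Pi.single j 1) i)
          (ENNReal.ofReal p') (volume.restrict S) := by
        have hcont : Continuous fun (L : (Fin m → ℝ) →L[ℝ] (Fin n → ℝ)) =>
            (fun j => L (Pi.single j 1) i) := by
          refine continuous_pi fun j => ?_
          exact (continuous_apply i).comp
            (ContinuousLinearMap.apply ℝ (Fin n → ℝ) (Pi.single j 1)).continuous
        refine MemLp.of_le hψLp (hcont.comp_aestronglyMeasurable hbx) ?_
        filter_upwards [habd, hmemS] with τ h1 h2
        have hb2 : ‖b τ (x τ)‖ ≤ N τ + R * BH τ := (h1 (x τ) (hxS τ h2)).2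
        have hbnd : ‖fun j => b τ (x τ) (Pi.single j 1) i‖ ≤ N τ + R * BH τ := by
          refine (pi_norm_le_iff_of_nonneg (hψnn τ)).2 fun j => ?_
          calc ‖b τ (x τ) (Pi.single j 1) i‖ ≤ ‖b τ (x τ) (Pi.single j 1)‖ :=
              norm_le_pi_norm _ i
            _ ≤ ‖b τ (x τ)‖ * ‖(Pi.single j 1 : Fin m → ℝ)‖ :=
              (b τ (x τ)).le_opNorm _
            _ ≤ ‖b τ (x τ)‖ * 1 :=
              mul_le_mul_of_nonneg_left (norm_single_le j) (norm_nonneg _)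
            _ = ‖b τ (x τ)‖ := mul_one _
            _ ≤ N τ + R * BH τ := hb2
        exact hbnd.trans (le_abs_self _)
      have hgmem : MemLp g (ENNReal.ofReal p') (volume.restrict (Set.Ioi 0)) := by
        rw [hgdef, memLp_indicator_iff_restrict measurableSet_Ioc,
          Measure.restrict_restrict measurableSet_Ioc,
          Set.inter_eq_self_of_subset_left hsub]
        exact hgS
      have hwk := hweak g hgmem
      have hident : ∀ k, (∫ τ in Set.Ioi 0, ∑ j, (uk k τ j - u τ j) * g τ j) = W k i := by
        intro k
        have h1 : (fun τ => ∑ j, (uk k τ j - u τ j) * g τ j)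
            = S.indicator (fun τ => b τ (x τ) (uk k τ - u τ) i) := by
          funext τ
          by_cases hτ : τ ∈ S
          · simp only [hgdef, Set.indicator_of_mem hτ]
            rw [clm_apply_eq_sum (b τ (x τ)) (uk k τ - u τ) i]
            simp [Pi.sub_apply]
          · simp [hgdef, Set.indicator_of_notMem hτ]
        rw [h1, integral_indicator measurableSet_Ioc,
          Measure.restrict_restrict measurableSet_Ioc,
          Set.inter_eq_self_of_subset_left hsub]
        simp only [hW]
        exact ContinuousLinearMap.integral_comp_comm
          (ContinuousLinearMap.proj (R := ℝ) (φ := fun _ : Fin n => ℝ) i) (hWint k)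
      have h0 : (0 : Fin n → ℝ) i = 0 := rfl
      rw [h0]
      exact hwk.congr hident
    have hEq : ∀ᶠ k in atTop, A k + B k + W k
        = (∫ τ in S, (a τ (xk k τ) + b τ (xk k τ) (uk k τ))) - I := by
      filter_upwards [hEv] with k hk
      have hkH := hkHmem k hk
      have Ia : Integrable (fun τ => a τ (xk k τ)) (volume.restrict S) :=
        hInt_a (xk k) (haxk k) hkH
      have Ib : Integrable (fun τ => b τ (xk k τ) (uk k τ)) (volume.restrict S) :=
        hInt_b (xk k) (hbxk k) hkH (uk k) (hukmem' k)
      have Ibxuk : Integrable (fun τ => b τ (x τ) (uk k τ)) (volume.restrict S) :=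
        hInt_b x hbx hxS (uk k) (hukmem' k)
      have eA : A k = (∫ τ in S, a τ (xk k τ)) - ∫ τ in S, a τ (x τ) := by
        simp only [hA]
        exact integral_sub Ia hGxint
      have eB : B k = (∫ τ in S, b τ (xk k τ) (uk k τ)) - ∫ τ in S, b τ (x τ) (uk k τ) := by
        simp only [hB, ContinuousLinearMap.sub_apply]
        exact integral_sub Ib Ibxuk
      have eW : W k = (∫ τ in S, b τ (x τ) (uk k τ)) - ∫ τ in S, b τ (x τ) (u τ) := by
        simp only [hW, map_sub]
        exact integral_sub Ibxuk hGbint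
      have eF : (∫ τ in S, (a τ (xk k τ) + b τ (xk k τ) (uk k τ)))
          = (∫ τ in S, a τ (xk k τ)) + ∫ τ in S, b τ (xk k τ) (uk k τ) := integral_add Ia Ib
      have eI : I = (∫ τ in S, a τ (x τ)) + ∫ τ in S, b τ (x τ) (u τ) := by
        simp only [hI]
        exact integral_add hGxint hGbint
      rw [eA, eB, eW, eF, eI]
      abel
    have hmain : Tendsto (fun k => ∫ τ in S, (a τ (xk k τ) + b τ (xk k τ) (uk k τ)))
        atTop (𝓝 I) := by
      have h1 : Tendsto (fun k => A k + B k + W k) atTop (𝓝 0) := by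
        simpa using (hAten.add hBten).add hWten
      have h2 : Tendsto (fun k => (∫ τ in S, (a τ (xk k τ) + b τ (xk k τ) (uk k τ))) - I)
          atTop (𝓝 0) := h1.congr' hEq
      have h3 := h2.add (tendsto_const_nhds (x := I))
      simpa using h3
    have hxt1 : Tendsto (fun k => xk k t) atTop (𝓝 (x t)) :=
      hUK.tendsto_at ⟨ht, le_refl t⟩
    have hxt2 : Tendsto (fun k => xk k t) atTop (𝓝 (x₀ + I)) := by
      have hfe : (fun k => xk k t)
          = fun k => x₀ + ∫ τ in S, (a τ (xk k τ) + b τ (xk k τ) (uk k τ)) := by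
        funext k; exact hxkeq k t ht
      rw [hfe]
      exact tendsto_const_nhds.add hmain
    exact tendsto_nhds_unique hxt1 hxt2
end
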